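/- Let k be a field of characteristic zero, F ⊆ k a subfield, and A a reduced commutative k-algebra that is essentially of finite type over k. Let B be the integral closure of A in its total ring of fractions (the normalization of A), and assume the map A → B is formally unramified (equivalently Ω¹_{B/A} = 0). Let I ⊆ A be a conducting ideal for the normalization, i.e. an ideal of A whose extension to B is contained in the image of I (so I is simultaneously an ideal of A and of B). Then for every i ≥ 0 the natural map Ω^i_{(A,I)/F} → Ω^i_{(B,I)/F} induced by A → B is surjective. -/

import Mathlib

open ExteriorAlgebra

section
variable (F A B : Type*) [CommRing F] [CommRing A] [CommRing B]
  [Algebra F A] [Algebra F B] [Algebra A B] [IsScalarTower F A B]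

/-- The natural algebra map on exterior algebras of Kähler differentials induced by `A → B`. -/
noncomputable def kaehlerExtMap :
    ExteriorAlgebra A (Ω[A⁄F]) →ₐ[A] ExteriorAlgebra B (Ω[B⁄F]) :=
  ExteriorAlgebra.lift A
    ⟨((ExteriorAlgebra.ι B).restrictScalars A).comp (KaehlerDifferential.map F F A B),
      fun _ => ExteriorAlgebra.ι_sq_zero _⟩

theorem kaehlerExtMap_mem (i : ℕ) (x : ExteriorAlgebra A (Ω[A⁄F]))
    (hx : x ∈ ⋀[A]^i (Ω[A⁄F])) :
    kaehlerExtMap F A B x ∈ ⋀[B]^i (Ω[B⁄F]) := by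
  rw [← ExteriorAlgebra.ιMulti_span_fixedDegree] at hx
  induction hx using Submodule.span_induction with
  | mem x h =>
      obtain ⟨v, rfl⟩ := h
      have : kaehlerExtMap F A B (ExteriorAlgebra.ιMulti A i v) =
          ExteriorAlgebra.ιMulti B i (fun j => KaehlerDifferential.map F F A B (v j)) := by
        rw [ExteriorAlgebra.ιMulti_apply, ExteriorAlgebra.ιMulti_apply, map_list_prod]
        simp only [List.map_ofFn]
        have hfun : (⇑(kaehlerExtMap F A B) ∘ fun j : Fin i => ExteriorAlgebra.ι A (v j)) =
            fun j : Fin i => ExteriorAlgebra.ι B (KaehlerDifferential.map F F A B (v j)) := by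
          funext j
          simp [kaehlerExtMap]
          first
            | exact ExteriorAlgebra.lift_ι_apply A _ _ (v j)
            | exact ExteriorAlgebra.lift_ι_apply _ _ (v j)
            | (rw [ExteriorAlgebra.lift_ι_apply]; try rfl)
        rw [hfun]
      rw [this]
      exact ExteriorAlgebra.ιMulti_range B i (Set.mem_range_self _)
  | zero => simp
  | add x y _ _ hx hy => rw [map_add]; exact Submodule.add_mem _ hx hy
  | smul a x _ hx =>
      rw [map_smul, ← IsScalarTower.algebraMap_smul B a (kaehlerExtMap F A B x)]
      exact Submodule.smul_mem _ _ hx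

/-- The natural map `Ω^i_{A/F} → Ω^i_{B/F}` on `i`-th exterior powers of Kähler differentials
induced by the `F`-algebra map `A → B`. -/
noncomputable def kaehlerPowMap (i : ℕ) :
    ⋀[A]^i (Ω[A⁄F]) →ₗ[A] ⋀[B]^i (Ω[B⁄F]) where
  toFun x := ⟨kaehlerExtMap F A B x.1, kaehlerExtMap_mem F A B i x.1 x.2⟩
  map_add' x y := Subtype.ext (by simp)
  map_smul' a x := Subtype.ext (by simp)

end


section Aux
variable (F A B : Type*) [CommRing F] [CommRing A] [CommRing B]
  [Algebra F A] [Algebra F B] [Algebra A B] [IsScalarTower F A B]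

theorem kaehlerExtMap_ιMulti (i : ℕ) (v : Fin i → Ω[A⁄F]) :
    kaehlerExtMap F A B (ExteriorAlgebra.ιMulti A i v) =
      ExteriorAlgebra.ιMulti B i (fun j => KaehlerDifferential.map F F A B (v j)) := by
  rw [ExteriorAlgebra.ιMulti_apply, ExteriorAlgebra.ιMulti_apply, map_list_prod]
  simp only [List.map_ofFn]
  have hfun : (⇑(kaehlerExtMap F A B) ∘ fun j : Fin i => ExteriorAlgebra.ι A (v j)) =
      fun j : Fin i => ExteriorAlgebra.ι B (KaehlerDifferential.map F F A B (v j)) := by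
    funext j
    simp [kaehlerExtMap]
    first
      | exact ExteriorAlgebra.lift_ι_apply A _ _ (v j)
      | exact ExteriorAlgebra.lift_ι_apply _ _ (v j)
      | (rw [ExteriorAlgebra.lift_ι_apply]; try rfl)
  rw [hfun]


end Aux

section KerLemma
variable (F B : Type*) [CommRing F] [CommRing B] [Algebra F B] (I' : Ideal B)

theorem ker_kaehler_map_le :
    LinearMap.ker (KaehlerDifferential.map F F B (B ⧸ I')) ≤
      I' • ⊤ ⊔ Submodule.span B (⇑(KaehlerDifferential.D F B) '' ↑I') := by
  set K : Submodule B (Ω[B⁄F]) :=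
    I' • ⊤ ⊔ Submodule.span B (⇑(KaehlerDifferential.D F B) '' ↑I') with hKdef
  have hsmul : ∀ a ∈ I', ∀ m : Ω[B⁄F], a • m ∈ K := fun a ha m =>
    Submodule.mem_sup_left (Submodule.smul_mem_smul ha Submodule.mem_top)
  have hD : ∀ a ∈ I', KaehlerDifferential.D F B a ∈ K := fun a ha =>
    Submodule.mem_sup_right (Submodule.subset_span ⟨a, ha, rfl⟩)
  have htors : Module.IsTorsionBySet B (Ω[B⁄F] ⧸ K) I' := by
    rintro m ⟨a, ha⟩
    obtain ⟨x, rfl⟩ := Submodule.mkQ_surjective K m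
    rw [← map_smul, Submodule.mkQ_apply, Submodule.Quotient.mk_eq_zero]
    exact hsmul a ha x
  letI : Module (B ⧸ I') (Ω[B⁄F] ⧸ K) := htors.module
  letI : IsScalarTower B (B ⧸ I') (Ω[B⁄F] ⧸ K) := htors.isScalarTower
  -- the F-linear map B → (Ω[B⁄F] ⧸ K)
  set h0 : B →ₗ[F] Ω[B⁄F] ⧸ K :=
    (K.mkQ.restrictScalars F).comp (KaehlerDifferential.D F B).toLinearMap with hh0
  have hker : Submodule.restrictScalars F I' ≤ LinearMap.ker h0 := by
    intro a ha
    simp only [LinearMap.mem_ker, hh0, LinearMap.coe_comp, Function.comp_apply,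
      LinearMap.coe_restrictScalars, Submodule.mkQ_apply, Derivation.coeFn_coe,
      Submodule.Quotient.mk_eq_zero]
    exact hD a ha
  set dlin : (B ⧸ I') →ₗ[F] Ω[B⁄F] ⧸ K :=
    (Submodule.liftQ (Submodule.restrictScalars F I') h0 hker).comp
      (Submodule.Quotient.restrictScalarsEquiv F I').symm.toLinearMap with hdlin
  have dmk : ∀ b : B, dlin (Ideal.Quotient.mk I' b) = K.mkQ (KaehlerDifferential.D F B b) := by
    intro b
    rfl
  -- build the derivation on B ⧸ I'
  set δ : Derivation F (B ⧸ I') (Ω[B⁄F] ⧸ K) :=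
    { toLinearMap := dlin
      map_one_eq_zero' := by
        have : (1 : B ⧸ I') = Ideal.Quotient.mk I' 1 := rfl
        rw [this, dmk]
        simp
      leibniz' := by
        intro x y
        obtain ⟨a, rfl⟩ := Ideal.Quotient.mk_surjective x
        obtain ⟨b, rfl⟩ := Ideal.Quotient.mk_surjective y
        rw [← map_mul, dmk, dmk, dmk, Derivation.leibniz, map_add, map_smul, map_smul,
          htors.mk_smul, htors.mk_smul] } with hδ
  have hl : ∀ ω : Ω[B⁄F],
      δ.liftKaehlerDifferential (KaehlerDifferential.map F F B (B ⧸ I') ω) = K.mkQ ω := by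
    intro ω
    have : ω ∈ (⊤ : Submodule B (Ω[B⁄F])) := Submodule.mem_top
    rw [← KaehlerDifferential.span_range_derivation] at this
    induction this using Submodule.span_induction with
    | mem x h =>
        obtain ⟨b, rfl⟩ := h
        rw [KaehlerDifferential.map_D, Derivation.liftKaehlerDifferential_comp_D]
        exact dmk b
    | zero => simp
    | add x y _ _ hx hy => rw [map_add, map_add, hx, hy, map_add]
    | smul b x _ hx =>
        have h1 : (KaehlerDifferential.map F F B (B ⧸ I')) (b • x)
            = algebraMap B (B ⧸ I') b • (KaehlerDifferential.map F F B (B ⧸ I')) x := by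
          rw [map_smul, IsScalarTower.algebraMap_smul]
        rw [h1, map_smul, IsScalarTower.algebraMap_smul, hx, map_smul]
  intro ω hω
  have := hl ω
  rw [LinearMap.mem_ker.mp hω, map_zero] at this
  rw [← Submodule.Quotient.mk_eq_zero, ← Submodule.mkQ_apply]
  exact this.symm


end KerLemma

section Step1

variable (F B : Type*) [CommRing F] [CommRing B] [Algebra F B] (I' : Ideal B) (i : ℕ)

set_option maxHeartbeats 1000000 in
set_option synthInstance.maxHeartbeats 400000 in
theorem mem_of_kaehlerPowMap_quotient_eq_zero
    (y : ⋀[B]^i (Ω[B⁄F])) (hy : kaehlerPowMap F B (B ⧸ I') i y = 0) :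
    y ∈ (I' • ⊤ : Submodule B (⋀[B]^i (Ω[B⁄F]))) ⊔ Submodule.span B
      {x : ⋀[B]^i (Ω[B⁄F]) | ∃ a ∈ I', ∃ v : Fin i → Ω[B⁄F], ∃ j : Fin i,
        v j = KaehlerDifferential.D F B a ∧ (x : ExteriorAlgebra B (Ω[B⁄F])) =
          ExteriorAlgebra.ιMulti B i v} := by
  classical
  set C := B ⧸ I' with hC
  set J : Submodule B (⋀[B]^i (Ω[B⁄F])) :=
    (I' • ⊤ : Submodule B (⋀[B]^i (Ω[B⁄F]))) ⊔ Submodule.span B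
      {x : ⋀[B]^i (Ω[B⁄F]) | ∃ a ∈ I', ∃ v : Fin i → Ω[B⁄F], ∃ j : Fin i,
        v j = KaehlerDifferential.D F B a ∧ (x : ExteriorAlgebra B (Ω[B⁄F])) =
          ExteriorAlgebra.ιMulti B i v} with hJ
  have htors : Module.IsTorsionBySet B ((⋀[B]^i (Ω[B⁄F])) ⧸ J) I' := by
    rintro m ⟨a, ha⟩
    obtain ⟨x, rfl⟩ := Submodule.mkQ_surjective J m
    rw [← map_smul, Submodule.mkQ_apply, Submodule.Quotient.mk_eq_zero]
    exact Submodule.mem_sup_left (Submodule.smul_mem_smul ha Submodule.mem_top)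
  letI : Module C ((⋀[B]^i (Ω[B⁄F])) ⧸ J) := htors.module
  letI : IsScalarTower B C ((⋀[B]^i (Ω[B⁄F])) ⧸ J) := htors.isScalarTower
  set p : Ω[B⁄F] →ₗ[B] Ω[C⁄F] := KaehlerDifferential.map F F B C with hp0
  have hp : Function.Surjective p :=
    KaehlerDifferential.map_surjective_of_surjective F F B C Ideal.Quotient.mk_surjective
  set wSub : Ω[B⁄F] [⋀^Fin i]→ₗ[B] (⋀[B]^i (Ω[B⁄F])) :=
    (ExteriorAlgebra.ιMulti B i).codRestrict (⋀[B]^i (Ω[B⁄F]))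
      (fun v => ExteriorAlgebra.ιMulti_range B i (Set.mem_range_self v)) with hwSub
  set w : Ω[B⁄F] [⋀^Fin i]→ₗ[B] ((⋀[B]^i (Ω[B⁄F])) ⧸ J) :=
    J.mkQ.compAlternatingMap wSub with hw
  -- `w` vanishes if some coordinate is in the kernel of `p`
  have hw0 : ∀ (v : Fin i → Ω[B⁄F]) (j : Fin i), p (v j) = 0 → w v = 0 := by
    intro v j hvj
    have hmem : v j ∈ I' • ⊤ ⊔ Submodule.span B (⇑(KaehlerDifferential.D F B) '' ↑I') :=
      ker_kaehler_map_le F B I' (LinearMap.mem_ker.mpr hvj)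
    obtain ⟨k₁, hk₁, k₂, hk₂, hk⟩ := Submodule.mem_sup.mp hmem
    have hv : v = Function.update v j (k₁ + k₂) := by
      rw [hk, Function.update_eq_self]
    have part1 : w (Function.update v j k₁) = 0 := by
      refine Submodule.smul_induction_on hk₁ ?_ ?_
      · intro a ha m _
        rw [AlternatingMap.map_update_smul, hw, LinearMap.compAlternatingMap_apply,
          ← map_smul, Submodule.mkQ_apply, Submodule.Quotient.mk_eq_zero]
        exact Submodule.mem_sup_left (Submodule.smul_mem_smul ha Submodule.mem_top)
      · intro x y hx hy
        rw [AlternatingMap.map_update_add, hx, hy, add_zero]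
    have part2 : ∀ k ∈ Submodule.span B (⇑(KaehlerDifferential.D F B) '' ↑I'),
        ∀ c : B, w (Function.update v j (c • k)) = 0 := by
      intro k hkmem
      induction hkmem using Submodule.span_induction with
      | mem x h =>
          obtain ⟨a, ha, rfl⟩ := h
          intro c
          rw [AlternatingMap.map_update_smul, hw, LinearMap.compAlternatingMap_apply,
            Submodule.mkQ_apply]
          have : Submodule.Quotient.mk (p := J) (wSub (Function.update v j
              (KaehlerDifferential.D F B a))) = 0 := by
            rw [Submodule.Quotient.mk_eq_zero]
            refine Submodule.mem_sup_right (Submodule.subset_span ?_)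
            exact ⟨a, ha, Function.update v j (KaehlerDifferential.D F B a), j,
              Function.update_self j _ v, rfl⟩
          rw [this, smul_zero]
      | zero => intro c; rw [smul_zero, AlternatingMap.map_update_zero]
      | add x y _ _ hx hy =>
          intro c
          rw [smul_add, AlternatingMap.map_update_add, hx c, hy c, add_zero]
      | smul b x _ hx =>
          intro c
          rw [smul_smul]
          exact hx (c * b)
    have part2' : w (Function.update v j k₂) = 0 := by
      have := part2 k₂ hk₂ 1
      rwa [one_smul] at this
    calc w v = w (Function.update v j (k₁ + k₂)) := by rw [← hv]
    _ = w (Function.update v j k₁) + w (Function.update v j k₂) := by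
          rw [AlternatingMap.map_update_add]
    _ = 0 := by rw [part1, part2', add_zero]
  -- `w` only depends on the images under `p`
  have hweq : ∀ u u' : Fin i → Ω[B⁄F], (∀ j, p (u j) = p (u' j)) → w u = w u' := by
    intro u u' huu
    have hd : u' = u + fun j => u' j - u j := by
      funext j
      simp
    have hadd := w.toMultilinearMap.map_add_univ u (fun j => u' j - u j)
    simp only [AlternatingMap.coe_multilinearMap] at hadd
    rw [hd, hadd]
    have hz : ∀ s : Finset (Fin i), s ∈ Finset.univ → s ≠ Finset.univ →
        w (s.piecewise u (fun j => u' j - u j)) = 0 := by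
      intro s _ hs
      obtain ⟨j, hj⟩ : ∃ j, j ∉ s := by
        by_contra h
        push_neg at h
        exact hs (Finset.eq_univ_iff_forall.mpr h)
      refine hw0 _ j ?_
      rw [Finset.piecewise_eq_of_notMem _ _ _ hj, map_sub, huu j, sub_self]
    rw [Finset.sum_eq_single_of_mem Finset.univ (Finset.mem_univ _) hz,
      Finset.piecewise_univ]
  -- descend `w` to an alternating map on `Ω[C⁄F]`
  set q : Ω[C⁄F] → Ω[B⁄F] := Function.surjInv hp with hq0
  have hq : ∀ x, p (q x) = x := fun x => Function.surjInv_eq hp x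
  set gfun : (Fin i → Ω[C⁄F]) → ((⋀[B]^i (Ω[B⁄F])) ⧸ J) :=
    fun v => w (fun j => q (v j)) with hgfun
  have hgl : ∀ u : Fin i → Ω[B⁄F], gfun (fun j => p (u j)) = w u := by
    intro u
    refine hweq _ _ fun j => ?_
    rw [hq]
  have hkey : ∀ (t : Fin i → Ω[B⁄F]) (j : Fin i) (s : Ω[B⁄F]),
      gfun (Function.update (fun j' => p (t j')) j (p s)) = w (Function.update t j s) := by
    intro t j s
    have : Function.update (fun j' => p (t j')) j (p s) =
        fun j' => p (Function.update t j s j') := by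
      funext j'
      by_cases h : j' = j
      · subst h; simp
      · simp [Function.update_of_ne h]
    rw [this, hgl]
  have hveq : ∀ v : Fin i → Ω[C⁄F], v = fun j' => p (q (v j')) := by
    intro v; funext j'; rw [hq]
  set g : Ω[C⁄F] [⋀^Fin i]→ₗ[C] ((⋀[B]^i (Ω[B⁄F])) ⧸ J) :=
    { toFun := gfun
      map_update_add' := by
        intro dec v j x y
        have hdec : dec = instDecidableEqFin i := Subsingleton.elim _ _
        subst hdec
        obtain ⟨a, rfl⟩ := hp x
        obtain ⟨b, rfl⟩ := hp y
        conv_lhs => rw [hveq v]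
        conv_rhs => rw [hveq v]
        rw [← map_add, hkey, hkey, hkey, AlternatingMap.map_update_add]
      map_update_smul' := by
        intro dec v j c x
        have hdec : dec = instDecidableEqFin i := Subsingleton.elim _ _
        subst hdec
        obtain ⟨cb, rfl⟩ := Ideal.Quotient.mk_surjective c
        obtain ⟨a, rfl⟩ := hp x
        conv_lhs => rw [hveq v]
        conv_rhs => rw [hveq v]
        have hc : (Ideal.Quotient.mk I' cb : C) • p a = p (cb • a) := by
          rw [map_smul, ← Ideal.Quotient.algebraMap_eq, IsScalarTower.algebraMap_smul]
        rw [hc, hkey, hkey, AlternatingMap.map_update_smul]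
        rw [← htors.mk_smul]
      map_eq_zero_of_eq' := by
        intro v j j' hval hne
        exact w.map_eq_zero_of_eq _ (by rw [hval]) hne } with hg
  set fam : ∀ n : ℕ, Ω[C⁄F] [⋀^Fin n]→ₗ[C] ((⋀[B]^i (Ω[B⁄F])) ⧸ J) :=
    Function.update (fun _ => 0) i g with hfam
  set Ψ : ExteriorAlgebra C (Ω[C⁄F]) →ₗ[C] ((⋀[B]^i (Ω[B⁄F])) ⧸ J) :=
    ExteriorAlgebra.liftAlternating fam with hΨ
  have hΨι : ∀ v : Fin i → Ω[C⁄F], Ψ (ExteriorAlgebra.ιMulti C i v) = gfun v := by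
    intro v
    rw [hΨ, ExteriorAlgebra.liftAlternating_apply_ιMulti, hfam, Function.update_self]
    rfl
  have hmain : ∀ (x : ExteriorAlgebra B (Ω[B⁄F]))
      (_ : x ∈ Submodule.span B (Set.range (ExteriorAlgebra.ιMulti B i)))
      (hx : x ∈ ⋀[B]^i (Ω[B⁄F])),
      Ψ (kaehlerExtMap F B C x) = J.mkQ ⟨x, hx⟩ := by
    intro x hx'
    induction hx' using Submodule.span_induction with
    | mem x h =>
        intro hx
        obtain ⟨v, rfl⟩ := h
        rw [kaehlerExtMap_ιMulti F B C i v, hΨι]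
        have h1 : gfun (fun j => KaehlerDifferential.map F F B C (v j)) = w v := hgl v
        rw [h1, hw, LinearMap.compAlternatingMap_apply]
        exact congrArg _ (Subtype.ext rfl)
    | zero =>
        intro hx
        have h0 : (⟨(0 : ExteriorAlgebra B (Ω[B⁄F])), hx⟩ : ⋀[B]^i (Ω[B⁄F])) = 0 :=
          Subtype.ext rfl
        rw [map_zero, map_zero, h0, map_zero]
    | add a b ha hb iha ihb =>
        intro hx
        have hma : a ∈ ⋀[B]^i (Ω[B⁄F]) := by
          rw [← ExteriorAlgebra.ιMulti_span_fixedDegree B i]; exact ha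
        have hmb : b ∈ ⋀[B]^i (Ω[B⁄F]) := by
          rw [← ExteriorAlgebra.ιMulti_span_fixedDegree B i]; exact hb
        have heq : (⟨a + b, hx⟩ : ⋀[B]^i (Ω[B⁄F])) = ⟨a, hma⟩ + ⟨b, hmb⟩ := Subtype.ext rfl
        rw [heq, map_add, map_add, map_add, iha hma, ihb hmb]
    | smul b x hxs ihx =>
        intro hx
        have hmx : x ∈ ⋀[B]^i (Ω[B⁄F]) := by
          rw [← ExteriorAlgebra.ιMulti_span_fixedDegree B i]; exact hxs
        have heq : (⟨b • x, hx⟩ : ⋀[B]^i (Ω[B⁄F])) = b • (⟨x, hmx⟩ : ⋀[B]^i (Ω[B⁄F])) :=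
          Subtype.ext rfl
        have hh1 : kaehlerExtMap F B C (b • x) =
            algebraMap B C b • kaehlerExtMap F B C x := by
          rw [map_smul, ← IsScalarTower.algebraMap_smul C b (kaehlerExtMap F B C x)]
        calc Ψ (kaehlerExtMap F B C (b • x))
            = Ψ (algebraMap B C b • kaehlerExtMap F B C x) := by rw [hh1]
          _ = algebraMap B C b • Ψ (kaehlerExtMap F B C x) := map_smul _ _ _
          _ = b • Ψ (kaehlerExtMap F B C x) := IsScalarTower.algebraMap_smul C b _
          _ = b • J.mkQ ⟨x, hmx⟩ := by rw [ihx hmx]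
          _ = J.mkQ (b • (⟨x, hmx⟩ : ⋀[B]^i (Ω[B⁄F]))) := (map_smul _ _ _).symm
          _ = J.mkQ ⟨b • x, hx⟩ := by rw [heq]
  have hval : kaehlerExtMap F B C (y : ExteriorAlgebra B (Ω[B⁄F])) = 0 :=
    congrArg Subtype.val hy
  have hspan : (y : ExteriorAlgebra B (Ω[B⁄F])) ∈
      Submodule.span B (Set.range (ExteriorAlgebra.ιMulti B i)) := by
    rw [ExteriorAlgebra.ιMulti_span_fixedDegree]
    exact y.2
  have h2 := hmain y.1 hspan y.2
  rw [hval, map_zero] at h2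
  have h3 : J.mkQ y = 0 := h2.symm
  rw [← Submodule.Quotient.mk_eq_zero J, ← Submodule.mkQ_apply]
  exact h3

end Step1

section Unram
variable (F A B : Type*) [CommRing F] [CommRing A] [CommRing B]
  [Algebra F A] [Algebra F B] [Algebra A B] [IsScalarTower F A B]
  [Algebra.FormallyUnramified A B]

set_option synthInstance.maxHeartbeats 1000000 in
set_option maxHeartbeats 1000000 in
theorem span_range_kaehler_map_eq_top :
    Submodule.span B (Set.range (KaehlerDifferential.map F F A B)) = ⊤ := by
  set S : Submodule B (Ω[B⁄F]) :=
    Submodule.span B (Set.range (KaehlerDifferential.map F F A B)) with hS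
  have hDin : ∀ b : B, KaehlerDifferential.D F B b ∈ S := by
    intro b
    set δlin : B →ₗ[A] Ω[B⁄F] ⧸ S :=
      { toFun := fun b => S.mkQ (KaehlerDifferential.D F B b)
        map_add' := fun x y => by rw [map_add, map_add]
        map_smul' := fun a x => by
          have hmem : S.mkQ (x • KaehlerDifferential.D F B (algebraMap A B a)) = 0 := by
            rw [Submodule.mkQ_apply, Submodule.Quotient.mk_eq_zero,
              ← KaehlerDifferential.map_D F F A B]
            exact Submodule.smul_mem S x (Submodule.subset_span (Set.mem_range_self _))
          rw [RingHom.id_apply, Algebra.smul_def, Derivation.leibniz, map_add, map_smul,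
            hmem, add_zero, IsScalarTower.algebraMap_smul] } with hδlin
    set δ : Derivation A B (Ω[B⁄F] ⧸ S) :=
      { toLinearMap := δlin
        map_one_eq_zero' := by
          show S.mkQ (KaehlerDifferential.D F B 1) = 0
          rw [Derivation.map_one_eq_zero, map_zero]
        leibniz' := fun x y => by
          show S.mkQ (KaehlerDifferential.D F B (x * y)) =
            x • S.mkQ (KaehlerDifferential.D F B y) + y • S.mkQ (KaehlerDifferential.D F B x)
          rw [Derivation.leibniz, map_add, map_smul, map_smul] } with hδ
    have h0 : δ.liftKaehlerDifferential = 0 := Subsingleton.elim _ _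
    have h2 : δ b = 0 := by
      have := δ.liftKaehlerDifferential_comp_D b
      rw [h0] at this
      simpa using this.symm
    have h3 : Submodule.Quotient.mk (KaehlerDifferential.D F B b) = (0 : Ω[B⁄F] ⧸ S) := h2
    exact (Submodule.Quotient.mk_eq_zero S).mp h3
  rw [eq_top_iff, ← KaehlerDifferential.span_range_derivation, Submodule.span_le]
  rintro _ ⟨b, rfl⟩
  exact hDin b

end Unram


set_option maxHeartbeats 2000000 in
set_option synthInstance.maxHeartbeats 400000 in
/-- Let `k` be a field of characteristic zero, `F ⊆ k` a subfield, and `A` a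
reduced commutative `k`-algebra essentially of finite type over `k`.  Let `B` be the
normalization of `A` (the integral closure of `A` in its total ring of fractions), and assume
that `A → B` is formally unramified.  Let `I ⊆ A` be a conducting ideal for the normalization,
i.e. the extension of `I` to `B` is contained in the image of `I`.  Then for every `i ≥ 0` the
natural map `Ω^i_{(A,I)/F} → Ω^i_{(B,IB)/F}` is surjective. -/
theorem relative_kaehler_power_surjective_of_normalization
    (F k A B : Type*) [Field F] [Field k] [CharZero k] [Algebra F k]
    [CommRing A] [IsReduced A] [Algebra k A] [Algebra F A] [IsScalarTower F k A]
    [Algebra.EssFiniteType k A]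
    [CommRing B] [Algebra A B] [Algebra F B] [IsScalarTower F A B]
    [Algebra B (FractionRing A)] [IsScalarTower A B (FractionRing A)]
    [IsIntegralClosure B A (FractionRing A)]
    [Algebra.FormallyUnramified A B]
    (I : Ideal A)
    (hI : ∀ (b : B), ∀ a ∈ I, ∃ a' ∈ I, algebraMap A B a' = b * algebraMap A B a)
    (i : ℕ) (y : ⋀[B]^i (Ω[B⁄F]))
    (hy : kaehlerPowMap F B (B ⧸ I.map (algebraMap A B)) i y = 0) :
    ∃ x : ⋀[A]^i (Ω[A⁄F]),
      kaehlerPowMap F A (A ⧸ I) i x = 0 ∧ kaehlerPowMap F A B i x = y := by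
  classical
  set I' : Ideal B := I.map (algebraMap A B) with hI'def
  set KX : Submodule A (ExteriorAlgebra A (Ω[A⁄F])) :=
    (⋀[A]^i (Ω[A⁄F])) ⊓ LinearMap.ker (kaehlerExtMap F A (A ⧸ I)).toLinearMap with hKX
  set G : Submodule A (ExteriorAlgebra B (Ω[B⁄F])) :=
    KX.map (kaehlerExtMap F A B).toLinearMap with hG
  have hspan : Submodule.span B (Set.range (KaehlerDifferential.map F F A B)) = ⊤ :=
    span_range_kaehler_map_eq_top F A B
  -- base case membership
  have hbase : ∀ (c : B) (a : A), a ∈ I → ∀ w : Fin i → Ω[A⁄F],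
      (c * algebraMap A B a) • ExteriorAlgebra.ιMulti B i
        (fun j => KaehlerDifferential.map F F A B (w j)) ∈ G := by
    intro c a ha w
    obtain ⟨a', ha', haa⟩ := hI c a ha
    have hz : a' • ExteriorAlgebra.ιMulti A i w ∈ KX := by
      refine Submodule.mem_inf.mpr ⟨?_, ?_⟩
      · exact Submodule.smul_mem _ _ (ExteriorAlgebra.ιMulti_range A i (Set.mem_range_self _))
      · rw [LinearMap.mem_ker]
        show kaehlerExtMap F A (A ⧸ I) (a' • ExteriorAlgebra.ιMulti A i w) = 0
        rw [map_smul, ← IsScalarTower.algebraMap_smul (A ⧸ I) a'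
          (kaehlerExtMap F A (A ⧸ I) (ExteriorAlgebra.ιMulti A i w)),
          Ideal.Quotient.algebraMap_eq, Ideal.Quotient.eq_zero_iff_mem.mpr ha', zero_smul]
    refine Submodule.mem_map.mpr ⟨a' • ExteriorAlgebra.ιMulti A i w, hz, ?_⟩
    show kaehlerExtMap F A B (a' • ExteriorAlgebra.ιMulti A i w) = _
    rw [map_smul, kaehlerExtMap_ιMulti, ← IsScalarTower.algebraMap_smul B a'
      (ExteriorAlgebra.ιMulti B i fun j => (KaehlerDifferential.map F F A B) (w j)), haa]
  -- expand arbitrary slots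
  have hgen : ∀ (v : Fin i → Ω[B⁄F]) (c : B) (a : A), a ∈ I →
      (c * algebraMap A B a) • ExteriorAlgebra.ιMulti B i v ∈ G := by
    have main : ∀ n : ℕ, ∀ v : Fin i → Ω[B⁄F],
        (∀ j : Fin i, n ≤ (j : ℕ) → ∃ u, v j = KaehlerDifferential.map F F A B u) →
        ∀ (c : B) (a : A), a ∈ I →
        (c * algebraMap A B a) • ExteriorAlgebra.ιMulti B i v ∈ G := by
      intro n
      induction n with
      | zero =>
          intro v hv c a ha
          choose u hu using fun j => hv j (Nat.zero_le _)
          have hveq : v = fun j => KaehlerDifferential.map F F A B (u j) := funext hu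
          rw [hveq]
          exact hbase c a ha u
      | succ n ihn =>
          intro v hv c a ha
          by_cases hni : n < i
          · set jn : Fin i := ⟨n, hni⟩ with hjn
            have hvj : v jn ∈ Submodule.span B (Set.range (KaehlerDifferential.map F F A B)) := by
              rw [hspan]; exact Submodule.mem_top
            have key : ∀ x, x ∈ Submodule.span B (Set.range (KaehlerDifferential.map F F A B)) →
                ∀ c : B, (c * algebraMap A B a) • ExteriorAlgebra.ιMulti B i
                  (Function.update v jn x) ∈ G := by
              intro x hx
              induction hx using Submodule.span_induction with
              | mem x h =>
                  intro c
                  obtain ⟨u0, rfl⟩ := h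
                  refine ihn (Function.update v jn (KaehlerDifferential.map F F A B u0)) ?_ c a ha
                  intro j hj
                  by_cases hjj : j = jn
                  · subst hjj
                    exact ⟨u0, Function.update_self _ _ _⟩
                  · rw [Function.update_of_ne hjj]
                    refine hv j ?_
                    rcases Nat.lt_or_ge (j : ℕ) (n+1) with h1 | h1
                    · exact absurd (Fin.ext (le_antisymm (Nat.lt_succ_iff.mp h1) hj)) hjj
                    · exact h1
              | zero =>
                  intro c
                  rw [AlternatingMap.map_update_zero, smul_zero]
                  exact Submodule.zero_mem _
              | add x z _ _ ihx ihz =>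
                  intro c
                  rw [AlternatingMap.map_update_add, smul_add]
                  exact Submodule.add_mem _ (ihx c) (ihz c)
              | smul b x _ ihx =>
                  intro c
                  rw [AlternatingMap.map_update_smul, smul_smul,
                    show (c * algebraMap A B a) * b = (c * b) * algebraMap A B a by ring]
                  exact ihx (c * b)
            have := key (v jn) hvj c
            rwa [Function.update_eq_self] at this
          · exact ihn v (fun j hj => absurd j.isLt (by omega)) c a ha
    intro v c a ha
    exact main i v (fun j hj => absurd j.isLt (by omega)) c a ha
  -- claim 1
  have hclaim1 : ∀ (x : ExteriorAlgebra B (Ω[B⁄F])),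
      x ∈ Submodule.span B (Set.range (ExteriorAlgebra.ιMulti B i)) →
      ∀ (c : B) (a : A), a ∈ I → (c * algebraMap A B a) • x ∈ G := by
    intro x hx
    induction hx using Submodule.span_induction with
    | mem x h =>
        intro c a ha
        obtain ⟨v, rfl⟩ := h
        exact hgen v c a ha
    | zero => intro c a ha; rw [smul_zero]; exact Submodule.zero_mem _
    | add x z _ _ ihx ihz =>
        intro c a ha
        rw [smul_add]
        exact Submodule.add_mem _ (ihx c a ha) (ihz c a ha)
    | smul b x _ ihx =>
        intro c a ha
        rw [smul_smul, show (c * algebraMap A B a) * b = (c * b) * algebraMap A B a by ring]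
        exact ihx (c * b) a ha
  -- claim 2
  have hclaim2 : ∀ a', a' ∈ I' → ∀ (x : ExteriorAlgebra B (Ω[B⁄F])),
      x ∈ Submodule.span B (Set.range (ExteriorAlgebra.ιMulti B i)) →
      ∀ c : B, (c * a') • x ∈ G := by
    intro a' ha'
    have ha'' : a' ∈ Submodule.span B ((algebraMap A B) '' ↑I) := ha'
    clear ha'
    induction ha'' using Submodule.span_induction with
    | mem z h =>
        obtain ⟨a, ha, rfl⟩ := h
        exact fun x hx c => hclaim1 x hx c a ha
    | zero =>
        intro x hx c
        rw [mul_zero, zero_smul]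
        exact Submodule.zero_mem _
    | add z z' _ _ ihz ihz' =>
        intro x hx c
        rw [mul_add, add_smul]
        exact Submodule.add_mem _ (ihz x hx c) (ihz' x hx c)
    | smul b z _ ihz =>
        intro x hx c
        rw [smul_eq_mul, show c * (b * z) = (c * b) * z by ring]
        exact ihz x hx (c * b)
  -- claim 3
  have hclaim3 : ∀ a', a' ∈ I' → ∀ (j : Fin i) (v : Fin i → Ω[B⁄F]) (c : B),
      c • ExteriorAlgebra.ιMulti B i
        (Function.update v j (KaehlerDifferential.D F B a')) ∈ G := by
    have hC : ∀ (a : A), a ∈ I → ∀ (j : Fin i) (v : Fin i → Ω[B⁄F]) (c : B),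
        c • ExteriorAlgebra.ιMulti B i
          (Function.update v j (KaehlerDifferential.D F B (algebraMap A B a))) ∈ G := by
      intro a ha j
      have main2 : ∀ n : ℕ, ∀ v : Fin i → Ω[B⁄F],
          (∀ j' : Fin i, j' ≠ j → n ≤ (j' : ℕ) →
            ∃ u, v j' = KaehlerDifferential.map F F A B u) →
          ∀ c : B, c • ExteriorAlgebra.ιMulti B i
            (Function.update v j (KaehlerDifferential.D F B (algebraMap A B a))) ∈ G := by
        intro n
        induction n with
        | zero =>
            intro v hv c
            have hv' : ∀ j' : Fin i, ∃ uu : Ω[A⁄F],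
                Function.update v j (KaehlerDifferential.D F B (algebraMap A B a)) j' =
                  KaehlerDifferential.map F F A B uu := by
              intro j'
              by_cases h : j' = j
              · subst h
                exact ⟨KaehlerDifferential.D F A a, by
                  rw [Function.update_self, KaehlerDifferential.map_D]⟩
              · rw [Function.update_of_ne h]
                exact hv j' h (Nat.zero_le _)
            choose w hw using hv'
            set t : Fin i → Ω[B⁄F] :=
              Function.update v j (KaehlerDifferential.D F B (algebraMap A B a)) with ht
            have htw : t = fun j' => KaehlerDifferential.map F F A B (w j') := funext hw
            have htj : t j = KaehlerDifferential.D F B (algebraMap A B a) :=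
              Function.update_self _ _ _
            obtain ⟨a', ha', haa⟩ := hI c a ha
            have hcd : c • KaehlerDifferential.D F B (algebraMap A B a) =
                KaehlerDifferential.D F B (algebraMap A B a') -
                  algebraMap A B a • KaehlerDifferential.D F B c := by
              rw [haa, Derivation.leibniz]
              abel
            have h1 : c • ExteriorAlgebra.ιMulti B i t =
                ExteriorAlgebra.ιMulti B i (Function.update t j
                  (c • KaehlerDifferential.D F B (algebraMap A B a))) := by
              rw [AlternatingMap.map_update_smul, ← htj, Function.update_eq_self]
            have h2 : Function.update t j (KaehlerDifferential.D F B (algebraMap A B a')) =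
                fun j' => KaehlerDifferential.map F F A B
                  (Function.update w j (KaehlerDifferential.D F A a') j') := by
              funext j'
              by_cases h : j' = j
              · subst h
                rw [Function.update_self, Function.update_self, KaehlerDifferential.map_D]
              · rw [Function.update_of_ne h, Function.update_of_ne h, htw]
            have hterm1 : ExteriorAlgebra.ιMulti B i (Function.update t j
                (KaehlerDifferential.D F B (algebraMap A B a'))) ∈ G := by
              rw [h2, ← kaehlerExtMap_ιMulti]
              refine Submodule.mem_map.mpr ⟨_, Submodule.mem_inf.mpr ⟨?_, ?_⟩, rfl⟩
              · exact ExteriorAlgebra.ιMulti_range A i (Set.mem_range_self _)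
              · rw [LinearMap.mem_ker]
                show kaehlerExtMap F A (A ⧸ I) (ExteriorAlgebra.ιMulti A i _) = 0
                rw [kaehlerExtMap_ιMulti]
                refine AlternatingMap.map_coord_zero _ j ?_
                rw [Function.update_self, KaehlerDifferential.map_D,
                  Ideal.Quotient.algebraMap_eq,
                  show (Ideal.Quotient.mk I) a' = 0 from
                    Ideal.Quotient.eq_zero_iff_mem.mpr ha', map_zero]
            have hterm2 : ExteriorAlgebra.ιMulti B i (Function.update t j
                (algebraMap A B a • KaehlerDifferential.D F B c)) ∈ G := by
              rw [AlternatingMap.map_update_smul]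
              have := hclaim1 (ExteriorAlgebra.ιMulti B i
                (Function.update t j (KaehlerDifferential.D F B c)))
                (Submodule.subset_span (Set.mem_range_self _)) 1 a ha
              rwa [one_mul] at this
            rw [h1, hcd, AlternatingMap.map_update_sub]
            exact Submodule.sub_mem _ hterm1 hterm2
        | succ n ihn =>
            intro v hv c
            by_cases hni : n < i
            · set jn : Fin i := ⟨n, hni⟩ with hjn
              by_cases hjnj : jn = j
              · refine ihn v ?_ c
                intro j' hj' hnj'
                refine hv j' hj' ?_
                rcases Nat.lt_or_ge (j' : ℕ) (n+1) with h1 | h1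
                · exact absurd
                    (show j' = j by
                      rw [← hjnj]
                      exact Fin.ext (le_antisymm (Nat.lt_succ_iff.mp h1) hnj')) hj'
                · exact h1
              · have hvj : v jn ∈
                    Submodule.span B (Set.range (KaehlerDifferential.map F F A B)) := by
                  rw [hspan]; exact Submodule.mem_top
                have hcomm : ∀ x : Ω[B⁄F],
                    Function.update (Function.update v jn x) j
                      (KaehlerDifferential.D F B (algebraMap A B a)) =
                    Function.update (Function.update v j
                      (KaehlerDifferential.D F B (algebraMap A B a))) jn x :=
                  fun x => Function.update_comm hjnj x _ v
                have key : ∀ x,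
                    x ∈ Submodule.span B (Set.range (KaehlerDifferential.map F F A B)) →
                    ∀ c : B, c • ExteriorAlgebra.ιMulti B i
                      (Function.update (Function.update v j
                        (KaehlerDifferential.D F B (algebraMap A B a))) jn x) ∈ G := by
                  intro x hx
                  induction hx using Submodule.span_induction with
                  | mem x h =>
                      intro c
                      obtain ⟨u0, rfl⟩ := h
                      rw [← hcomm]
                      refine ihn (Function.update v jn
                        (KaehlerDifferential.map F F A B u0)) ?_ c
                      intro j' hj' hnj'
                      by_cases hjj : j' = jn
                      · subst hjj; exact ⟨u0, Function.update_self _ _ _⟩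
                      · rw [Function.update_of_ne hjj]
                        refine hv j' hj' ?_
                        rcases Nat.lt_or_ge (j' : ℕ) (n+1) with h1 | h1
                        · exact absurd (Fin.ext (le_antisymm (Nat.lt_succ_iff.mp h1) hnj')) hjj
                        · exact h1
                  | zero =>
                      intro c
                      rw [AlternatingMap.map_update_zero, smul_zero]
                      exact Submodule.zero_mem _
                  | add x z _ _ ihx ihz =>
                      intro c
                      rw [AlternatingMap.map_update_add, smul_add]
                      exact Submodule.add_mem _ (ihx c) (ihz c)
                  | smul b x _ ihx =>
                      intro c
                      rw [AlternatingMap.map_update_smul, smul_smul]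
                      exact ihx (c * b)
                have := key (v jn) hvj c
                rw [show v jn = Function.update v j
                    (KaehlerDifferential.D F B (algebraMap A B a)) jn from
                    (Function.update_of_ne hjnj _ v).symm,
                  Function.update_eq_self] at this
                exact this
            · exact ihn v (fun j' hj' hnj' => absurd j'.isLt (by omega)) c
      intro v c
      exact main2 i v (fun j' _ hj' => absurd j'.isLt (by omega)) c
    intro a' ha'
    have ha'' : a' ∈ Submodule.span B ((algebraMap A B) '' ↑I) := ha'
    clear ha'
    induction ha'' using Submodule.span_induction with
    | mem z h =>
        obtain ⟨a, ha, rfl⟩ := h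
        exact hC a ha
    | zero =>
        intro j v c
        rw [map_zero, AlternatingMap.map_update_zero, smul_zero]
        exact Submodule.zero_mem _
    | add z z' _ _ ihz ihz' =>
        intro j v c
        rw [map_add, AlternatingMap.map_update_add, smul_add]
        exact Submodule.add_mem _ (ihz j v c) (ihz' j v c)
    | smul b z hz ihz =>
        intro j v c
        rw [smul_eq_mul, Derivation.leibniz, AlternatingMap.map_update_add, smul_add,
          AlternatingMap.map_update_smul, AlternatingMap.map_update_smul, smul_smul, smul_smul]
        refine Submodule.add_mem _ (ihz j v (c * b)) ?_
        exact hclaim2 z hz (ExteriorAlgebra.ιMulti B i (Function.update v j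
          (KaehlerDifferential.D F B b))) (Submodule.subset_span (Set.mem_range_self _)) c
  -- apply step 1
  have hstep1 := mem_of_kaehlerPowMap_quotient_eq_zero F B I' i y hy
  obtain ⟨y₁, hy₁, y₂, hy₂, hysum⟩ := Submodule.mem_sup.mp hstep1
  have hy₁G : (y₁ : ExteriorAlgebra B (Ω[B⁄F])) ∈ G := by
    refine Submodule.smul_induction_on hy₁ ?_ ?_
    · intro a' ha' x _
      have hxspan : (x : ExteriorAlgebra B (Ω[B⁄F])) ∈
          Submodule.span B (Set.range (ExteriorAlgebra.ιMulti B i)) := by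
        rw [ExteriorAlgebra.ιMulti_span_fixedDegree]
        exact x.2
      have := hclaim2 a' ha' x.1 hxspan 1
      rwa [one_mul] at this
    · intro u v hu hv
      rw [Submodule.coe_add]
      exact Submodule.add_mem _ hu hv
  have hy₂G : (y₂ : ExteriorAlgebra B (Ω[B⁄F])) ∈ G := by
    have key : ∀ x ∈ Submodule.span B
        {x : ⋀[B]^i (Ω[B⁄F]) | ∃ a ∈ I', ∃ v : Fin i → Ω[B⁄F], ∃ j : Fin i,
          v j = KaehlerDifferential.D F B a ∧ (x : ExteriorAlgebra B (Ω[B⁄F])) =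
            ExteriorAlgebra.ιMulti B i v},
        ∀ c : B, c • (x : ExteriorAlgebra B (Ω[B⁄F])) ∈ G := by
      intro x hx
      induction hx using Submodule.span_induction with
      | mem x h =>
          obtain ⟨a', ha', v, j, hvj, hxval⟩ := h
          intro c
          rw [hxval, show v = Function.update v j (KaehlerDifferential.D F B a') from by
            rw [← hvj, Function.update_eq_self]]
          exact hclaim3 a' ha' j v c
      | zero =>
          intro c
          rw [ZeroMemClass.coe_zero, smul_zero]
          exact Submodule.zero_mem _
      | add x z _ _ ihx ihz =>
          intro c
          rw [Submodule.coe_add, smul_add]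
          exact Submodule.add_mem _ (ihx c) (ihz c)
      | smul b x _ ihx =>
          intro c
          rw [SetLike.val_smul, smul_smul]
          exact ihx (c * b)
    have := key y₂ hy₂ 1
    rwa [one_smul] at this
  have hyG : (y : ExteriorAlgebra B (Ω[B⁄F])) ∈ G := by
    rw [← hysum, Submodule.coe_add]
    exact Submodule.add_mem _ hy₁G hy₂G
  obtain ⟨x', hx'KX, hx'⟩ := Submodule.mem_map.mp hyG
  obtain ⟨hx'Λ, hx'ker⟩ := Submodule.mem_inf.mp hx'KX
  refine ⟨⟨x', hx'Λ⟩, ?_, ?_⟩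
  · apply Subtype.ext
    exact LinearMap.mem_ker.mp hx'ker
  · apply Subtype.ext
    exact hx'
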